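/- The unique global minimizer c* of H satisfies 0.5275 < c* < 0.5277. -/

import Mathlib

open MeasureTheory Real Set

/-- The closed trapezium with vertices (2,-1), (-1,2), (-1,0), (0,-1). -/
def T : Set (ℝ × ℝ) :=
  {p : ℝ × ℝ | -1 ≤ p.1 ∧ -1 ≤ p.2 ∧ -1 ≤ p.1 + p.2 ∧ p.1 + p.2 ≤ 1}

/-- `H c = ∫_T e^{-c(x₁+x₂)} dx₁ dx₂` (Lebesgue measure on ℝ²). -/
noncomputable def H (c : ℝ) : ℝ := ∫ p in T, Real.exp (-c * (p.1 + p.2))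

lemma T_closed : IsClosed T := by
  have h1 : IsClosed {p : ℝ × ℝ | -1 ≤ p.1} := isClosed_le continuous_const continuous_fst
  have h2 : IsClosed {p : ℝ × ℝ | -1 ≤ p.2} := isClosed_le continuous_const continuous_snd
  have h3 : IsClosed {p : ℝ × ℝ | -1 ≤ p.1 + p.2} :=
    isClosed_le continuous_const (continuous_fst.add continuous_snd)
  have h4 : IsClosed {p : ℝ × ℝ | p.1 + p.2 ≤ 1} :=
    isClosed_le (continuous_fst.add continuous_snd) continuous_const
  exact ((h1.inter (h2.inter (h3.inter h4))) : _)

lemma T_meas : MeasurableSet T := T_closed.measurableSet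

lemma T_compact : IsCompact T := by
  refine IsCompact.of_isClosed_subset
    (isCompact_Icc (a := ((-1 : ℝ), (-1 : ℝ))) (b := ((2 : ℝ), (2 : ℝ)))) T_closed ?_
  rintro ⟨x, y⟩ ⟨h1, h2, h3, h4⟩
  simp only [Set.mem_Icc, Prod.mk_le_mk]
  refine ⟨⟨h1, h2⟩, ?_, ?_⟩ <;> dsimp at * <;> linarith

lemma int_on (c : ℝ) : IntegrableOn (fun p : ℝ × ℝ => Real.exp (-c * (p.1 + p.2))) T := by
  exact (Real.continuous_exp.comp (continuous_const.mul
    (continuous_fst.add continuous_snd))).continuousOn.integrableOn_compact T_compact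

lemma expInt (c : ℝ) (hc : c ≠ 0) (x a b : ℝ) :
    ∫ y in a..b, Real.exp (-c * (x + y)) =
      (Real.exp (-c * (x + a)) - Real.exp (-c * (x + b))) / c := by
  have hderiv : ∀ y ∈ Set.uIcc a b, HasDerivAt (fun y => -Real.exp (-c * (x + y)) / c)
      (Real.exp (-c * (x + y))) y := by
    intro y _
    have h1 : HasDerivAt (fun y : ℝ => -c * (x + y)) (-c) y := by
      simpa using ((hasDerivAt_id y).const_add x).const_mul (-c)
    have h2 := h1.exp
    have h3 := (h2.div_const c).neg
    have he : -(Real.exp (-c * (x + y)) * -c / c) = Real.exp (-c * (x + y)) := by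
      field_simp
    rw [← he]
    have h4 : (fun y => -Real.exp (-c * (x + y)) / c) = -fun y => Real.exp (-c * (x + y)) / c := by
      funext y
      rw [Pi.neg_apply, neg_div]
    rw [h4]
    exact h3
  rw [intervalIntegral.integral_eq_sub_of_hasDerivAt hderiv
    ((Real.continuous_exp.comp (continuous_const.mul
      (continuous_const.add continuous_id))).intervalIntegrable a b)]
  ring

noncomputable def g (c x : ℝ) : ℝ :=
  ∫ y in Icc (max (-1) (-1 - x)) (1 - x), Real.exp (-c * (x + y))

lemma g_eq1 (c : ℝ) (hc : c ≠ 0) : ∀ x ∈ Icc (-1 : ℝ) 0,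
    g c x = (Real.exp c - Real.exp (-c)) / c := by
  rintro x ⟨hx1, hx2⟩
  have hmax : max (-1 : ℝ) (-1 - x) = -1 - x := max_eq_right (by linarith)
  have hle : -1 - x ≤ 1 - x := by linarith
  rw [g, hmax, integral_Icc_eq_integral_Ioc, ← intervalIntegral.integral_of_le hle,
    expInt c hc]
  have e1 : -c * (x + (-1 - x)) = c := by ring
  have e2 : -c * (x + (1 - x)) = -c := by ring
  rw [e1, e2]

lemma g_eq2 (c : ℝ) (hc : c ≠ 0) : ∀ x ∈ Ioc (0 : ℝ) 2,
    g c x = (Real.exp (-c * (x - 1)) - Real.exp (-c)) / c := by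
  rintro x ⟨hx1, hx2⟩
  have hmax : max (-1 : ℝ) (-1 - x) = -1 := max_eq_left (by linarith)
  have hle : (-1 : ℝ) ≤ 1 - x := by linarith
  rw [g, hmax, integral_Icc_eq_integral_Ioc, ← intervalIntegral.integral_of_le hle,
    expInt c hc]
  have e1 : -c * (x + -1) = -c * (x - 1) := by ring
  have e2 : -c * (x + (1 - x)) = -c := by ring
  rw [e1, e2]

lemma Hform (c : ℝ) (hc : c ≠ 0) :
    H c = ((1 + c) * Real.exp c - (1 + 3 * c) * Real.exp (-c)) / c ^ 2 := by
  set f : ℝ × ℝ → ℝ := fun p => Real.exp (-c * (p.1 + p.2)) with hf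
  have hint : Integrable (T.indicator f) (volume.prod volume) := by
    rw [← Measure.volume_eq_prod]
    exact (integrable_indicator_iff T_meas).2 (int_on c)
  have step1 : H c = ∫ x : ℝ, ∫ y : ℝ, T.indicator f (x, y) := by
    rw [H, ← integral_indicator T_meas]
    rw [show (volume : Measure (ℝ × ℝ)) = volume.prod volume from Measure.volume_eq_prod ℝ ℝ]
    exact integral_prod _ hint
  have inner : ∀ x : ℝ, (∫ y : ℝ, T.indicator f (x, y)) = (Icc (-1 : ℝ) 2).indicator (g c) x := by
    intro x
    by_cases hx : -1 ≤ x
    · have key : (fun y => T.indicator f (x, y)) =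
          (Icc (max (-1) (-1 - x)) (1 - x)).indicator (fun y => Real.exp (-c * (x + y))) := by
        funext y
        have memiff : (x, y) ∈ T ↔ y ∈ Icc (max (-1 : ℝ) (-1 - x)) (1 - x) := by
          simp only [T, Set.mem_setOf_eq, Set.mem_Icc, max_le_iff]
          constructor
          · rintro ⟨_, h2, h3, h4⟩; exact ⟨⟨h2, by linarith⟩, by linarith⟩
          · rintro ⟨⟨h2, h3⟩, h4⟩; exact ⟨hx, h2, by linarith, by linarith⟩
        by_cases h : (x, y) ∈ T
        · rw [Set.indicator_of_mem h, Set.indicator_of_mem (memiff.1 h)]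
        · rw [Set.indicator_of_notMem h,
            Set.indicator_of_notMem (fun hm => h (memiff.2 hm))]
      rw [key, integral_indicator measurableSet_Icc]
      by_cases hx2 : x ≤ 2
      · rw [Set.indicator_of_mem (Set.mem_Icc.2 ⟨hx, hx2⟩)]
        rfl
      · rw [Set.indicator_of_notMem (fun hm => hx2 hm.2)]
        have hemp : Icc (max (-1 : ℝ) (-1 - x)) (1 - x) = ∅ := by
          apply Icc_eq_empty
          rw [not_le]
          calc 1 - x < -1 := by linarith
            _ ≤ max (-1 : ℝ) (-1 - x) := le_max_left _ _
        rw [hemp]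
        simp
    · have key : (fun y => T.indicator f (x, y)) = fun _ => (0 : ℝ) := by
        funext y
        apply Set.indicator_of_notMem
        intro hm
        exact hx hm.1
      rw [key, Set.indicator_of_notMem (fun hm => hx hm.1)]
      simp
  have step2 : H c = ∫ x in Icc (-1 : ℝ) 2, g c x := by
    rw [step1]
    simp_rw [inner]
    rw [integral_indicator measurableSet_Icc]
  have hdisj : Disjoint (Icc (-1 : ℝ) 0) (Ioc (0 : ℝ) 2) :=
    Set.disjoint_left.2 fun x hx hx2 => absurd hx.2 (not_le.2 hx2.1)
  have hunion : Icc (-1 : ℝ) 2 = Icc (-1 : ℝ) 0 ∪ Ioc (0 : ℝ) 2 :=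
    (Set.Icc_union_Ioc_eq_Icc (by norm_num) (by norm_num)).symm
  have hintK : IntegrableOn (g c) (Icc (-1 : ℝ) 0) := by
    rw [integrableOn_congr_fun (g_eq1 c hc) measurableSet_Icc]
    exact integrableOn_const (by
      rw [Real.volume_Icc]; exact ENNReal.ofReal_lt_top.ne)
  have hcont2 : Continuous fun x : ℝ => (Real.exp (-c * (x - 1)) - Real.exp (-c)) / c :=
    ((Real.continuous_exp.comp (continuous_const.mul
      (continuous_id.sub continuous_const))).sub continuous_const).div_const c
  have hint2 : IntegrableOn (g c) (Ioc (0 : ℝ) 2) := by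
    rw [integrableOn_congr_fun (g_eq2 c hc) measurableSet_Ioc]
    exact (hcont2.continuousOn.integrableOn_compact isCompact_Icc).mono_set Ioc_subset_Icc_self
  have step3 : H c = (∫ x in Icc (-1 : ℝ) 0, g c x) + ∫ x in Ioc (0 : ℝ) 2, g c x := by
    rw [step2, hunion, setIntegral_union hdisj measurableSet_Ioc hintK hint2]
  have v1 : ∫ x in Icc (-1 : ℝ) 0, g c x = (Real.exp c - Real.exp (-c)) / c := by
    rw [setIntegral_congr_fun measurableSet_Icc (g_eq1 c hc), setIntegral_const]
    rw [Real.volume_real_Icc]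
    norm_num
  have I2 : ∫ x in (0 : ℝ)..2, Real.exp (-c * (x - 1)) = (Real.exp c - Real.exp (-c)) / c := by
    have harg : ∀ x : ℝ, -c * (x - 1) = -c * (-1 + x) := fun x => by ring
    simp_rw [harg]
    rw [expInt c hc (-1) 0 2]
    norm_num
  have v2 : ∫ x in Ioc (0 : ℝ) 2, g c x =
      ((Real.exp c - Real.exp (-c)) / c - 2 * Real.exp (-c)) / c := by
    rw [setIntegral_congr_fun measurableSet_Ioc (g_eq2 c hc),
      ← intervalIntegral.integral_of_le (by norm_num : (0 : ℝ) ≤ 2)]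
    have hi1 : IntervalIntegrable (fun x : ℝ => Real.exp (-c * (x - 1))) volume 0 2 :=
      (Real.continuous_exp.comp (continuous_const.mul
        (continuous_id.sub continuous_const))).intervalIntegrable 0 2
    have hi2 : IntervalIntegrable (fun _ : ℝ => Real.exp (-c)) volume 0 2 :=
      intervalIntegrable_const
    rw [intervalIntegral.integral_div, intervalIntegral.integral_sub hi1 hi2,
      intervalIntegral.integral_const, I2]
    norm_num
  rw [step3, v1, v2]
  field_simp
  ring

lemma Hconvex : ConvexOn ℝ Set.univ H := by
  refine ⟨convex_univ, ?_⟩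
  intro a _ b _ s t hs ht hst
  simp only [smul_eq_mul, H]
  have key : ∀ p : ℝ × ℝ, p ∈ T →
      Real.exp (-(s • a + t • b) * (p.1 + p.2)) ≤
        s * Real.exp (-a * (p.1 + p.2)) + t * Real.exp (-b * (p.1 + p.2)) := by
    intro p _
    have := convexOn_exp.2 (Set.mem_univ (-a * (p.1 + p.2))) (Set.mem_univ (-b * (p.1 + p.2)))
      hs ht hst
    simp only [smul_eq_mul] at this ⊢
    have harg : -(s * a + t * b) * (p.1 + p.2) = s * (-a * (p.1 + p.2)) + t * (-b * (p.1 + p.2)) := by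
      ring
    rw [harg]
    exact this
  calc ∫ p in T, Real.exp (-(s • a + t • b) * (p.1 + p.2))
      ≤ ∫ p in T, (s * Real.exp (-a * (p.1 + p.2)) + t * Real.exp (-b * (p.1 + p.2))) := by
        apply setIntegral_mono_on (int_on _) _ T_meas key
        exact ((int_on a).const_mul s).add ((int_on b).const_mul t)
    _ = s * H a + t * H b := by
        rw [integral_add ((int_on a).const_mul s) ((int_on b).const_mul t),
          integral_const_mul, integral_const_mul]
        rfl

lemma expb (x : ℝ) (h0 : 0 ≤ x) (h1 : x ≤ 1) :
    |Real.exp x - ∑ m ∈ Finset.range 12, x ^ m / m.factorial| ≤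
      x ^ 12 * (13 / (479001600 * 12)) := by
  have h := Real.exp_bound (x := x) (by rw [abs_of_nonneg h0]; exact h1) (n := 12) (by norm_num)
  rw [abs_of_nonneg h0] at h
  convert h using 2 <;> norm_num [Nat.factorial]

lemma e5275_lb : (1.694690282586 : ℝ) ≤ Real.exp 0.5275 := by
  have h := expb 0.5275 (by norm_num) (by norm_num)
  rw [abs_le] at h
  have hS : (∑ m ∈ Finset.range 12, (0.5275 : ℝ) ^ m / m.factorial) =
      2837304597943648531567894630956637211 / 1674231939072000000000000000000000000 := by
    simp only [Finset.sum_range_succ, Finset.sum_range_zero, Nat.factorial]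
    norm_num
  have herr : (0.5275 : ℝ) ^ 12 * (13 / (479001600 * 12)) ≤ 1.2e-12 := by norm_num
  rw [hS] at h
  linarith [h.1]

lemma e5276_ub : Real.exp 0.5276 ≤ (1.694859760092 : ℝ) := by
  have h := expb 0.5276 (by norm_num) (by norm_num)
  rw [abs_le] at h
  have hS : (∑ m ∈ Finset.range 12, (0.5276 : ℝ) ^ m / m.factorial) =
      1612982227124140926742278741477787776028030019 / 951690673828125000000000000000000000000000000 := by
    simp only [Finset.sum_range_succ, Finset.sum_range_zero, Nat.factorial]
    norm_num
  have herr : (0.5276 : ℝ) ^ 12 * (13 / (479001600 * 12)) ≤ 1.2e-12 := by norm_num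
  rw [hS] at h
  linarith [h.2]

lemma e5277_lb : (1.695029254539 : ℝ) ≤ Real.exp 0.5277 := by
  have h := expb 0.5277 (by norm_num) (by norm_num)
  rw [abs_le] at h
  have hS : (∑ m ∈ Finset.range 12, (0.5277 : ℝ) ^ m / m.factorial) =
      83531041663755754911871415619064094358198512992133 / 49280000000000000000000000000000000000000000000000 := by
    simp only [Finset.sum_range_succ, Finset.sum_range_zero, Nat.factorial]
    norm_num
  have herr : (0.5277 : ℝ) ^ 12 * (13 / (479001600 * 12)) ≤ 1.2e-12 := by norm_num
  rw [hS] at h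
  linarith [h.1]

lemma Hcmp1 : H 0.5276 < H 0.5275 := by
  rw [Hform 0.5275 (by norm_num), Hform 0.5276 (by norm_num), Real.exp_neg, Real.exp_neg]
  have h1 := e5275_lb
  have h2 := e5276_ub
  have p1 : (0:ℝ) < 1.694690282586 := by norm_num
  have p2 : (0:ℝ) < Real.exp 0.5276 := Real.exp_pos _
  have l1 : ((1 + 0.5275) * (1.694690282586:ℝ) - (1 + 3 * 0.5275) * (1.694690282586:ℝ)⁻¹) / 0.5275 ^ 2 ≤
      ((1 + 0.5275) * Real.exp 0.5275 - (1 + 3 * 0.5275) * (Real.exp 0.5275)⁻¹) / 0.5275 ^ 2 := by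
    gcongr <;> norm_num
  have l2 : ((1 + 0.5276) * Real.exp 0.5276 - (1 + 3 * 0.5276) * (Real.exp 0.5276)⁻¹) / 0.5276 ^ 2 ≤
      ((1 + 0.5276) * (1.694859760092:ℝ) - (1 + 3 * 0.5276) * (1.694859760092:ℝ)⁻¹) / 0.5276 ^ 2 := by
    gcongr <;> norm_num [Real.exp_pos]
  have key : ((1 + 0.5276) * (1.694859760092:ℝ) - (1 + 3 * 0.5276) * (1.694859760092:ℝ)⁻¹) / 0.5276 ^ 2 <
      ((1 + 0.5275) * (1.694690282586:ℝ) - (1 + 3 * 0.5275) * (1.694690282586:ℝ)⁻¹) / 0.5275 ^ 2 := by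
    norm_num
  linarith

lemma Hcmp2 : H 0.5276 < H 0.5277 := by
  rw [Hform 0.5277 (by norm_num), Hform 0.5276 (by norm_num), Real.exp_neg, Real.exp_neg]
  have h1 := e5277_lb
  have h2 := e5276_ub
  have l1 : ((1 + 0.5277) * (1.695029254539:ℝ) - (1 + 3 * 0.5277) * (1.695029254539:ℝ)⁻¹) / 0.5277 ^ 2 ≤
      ((1 + 0.5277) * Real.exp 0.5277 - (1 + 3 * 0.5277) * (Real.exp 0.5277)⁻¹) / 0.5277 ^ 2 := by
    gcongr <;> norm_num
  have l2 : ((1 + 0.5276) * Real.exp 0.5276 - (1 + 3 * 0.5276) * (Real.exp 0.5276)⁻¹) / 0.5276 ^ 2 ≤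
      ((1 + 0.5276) * (1.694859760092:ℝ) - (1 + 3 * 0.5276) * (1.694859760092:ℝ)⁻¹) / 0.5276 ^ 2 := by
    gcongr <;> norm_num [Real.exp_pos]
  have key : ((1 + 0.5276) * (1.694859760092:ℝ) - (1 + 3 * 0.5276) * (1.694859760092:ℝ)⁻¹) / 0.5276 ^ 2 <
      ((1 + 0.5277) * (1.695029254539:ℝ) - (1 + 3 * 0.5277) * (1.695029254539:ℝ)⁻¹) / 0.5277 ^ 2 := by
    norm_num
  linarith

/-- The unique global minimizer `cs` of `H` satisfies `0.5275 < cs < 0.5277`. -/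
theorem stmt_10 (cs : ℝ) (hmin : ∀ c : ℝ, H cs ≤ H c) :
    0.5275 < cs ∧ cs < 0.5277 := by
  constructor
  · by_contra hle
    push_neg at hle
    have hseg : (0.5275 : ℝ) ∈ segment ℝ cs 0.5276 := by
      rw [segment_eq_Icc (by linarith)]
      exact ⟨hle, by norm_num⟩
    have h := Hconvex.le_on_segment (Set.mem_univ cs) (Set.mem_univ 0.5276) hseg
    rw [max_eq_right (hmin 0.5276)] at h
    linarith [Hcmp1]
  · by_contra hge
    push_neg at hge
    have hseg : (0.5277 : ℝ) ∈ segment ℝ 0.5276 cs := by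
      rw [segment_eq_Icc (by linarith)]
      exact ⟨by norm_num, hge⟩
    have h := Hconvex.le_on_segment (Set.mem_univ 0.5276) (Set.mem_univ cs) hseg
    rw [max_eq_left (hmin 0.5276)] at h
    linarith [Hcmp2]
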